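/- Let α > γ > 0, β, κ, p > 0, and let ψ, φ: [0,ω) → ℝ be positive absolutely continuous functions with ψ̇(t) = p φ(t) - α ψ(t) + κ, φ̇(t) ≥ -γ φ(t) + β, and φ(t) ≥ β/γ for all t. Define M = max{ ψ(0)/φ(0), (pβ + κγ)/(β(α - γ)) }. Then ψ(t)/φ(t) ≤ M for all t ∈ [0,ω). -/
import Mathlib


/-- Steps 4–5 of the proof of the main theorem: the ratio `ψ/φ` of consecutive
funnel boundary functions remains bounded by `M`. -/
theorem stmt6 (α γ β κ p ω M : ℝ)
    (hγ : 0 < γ) (hαγ : γ < α) (hβ : 0 < β) (hκ : 0 < κ) (hp : 0 < p)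
    (ψ φ ψ' φ' : ℝ → ℝ)
    (hψpos : ∀ t ∈ Set.Ico (0:ℝ) ω, 0 < ψ t)
    (hφpos : ∀ t ∈ Set.Ico (0:ℝ) ω, 0 < φ t)
    (hψder : ∀ t ∈ Set.Ico (0:ℝ) ω, HasDerivAt ψ (ψ' t) t)
    (hφder : ∀ t ∈ Set.Ico (0:ℝ) ω, HasDerivAt φ (φ' t) t)
    (hψeq : ∀ t ∈ Set.Ico (0:ℝ) ω, ψ' t = p * φ t - α * ψ t + κ)
    (hφineq : ∀ t ∈ Set.Ico (0:ℝ) ω, φ' t ≥ -γ * φ t + β)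
    (hφlb : ∀ t ∈ Set.Ico (0:ℝ) ω, φ t ≥ β / γ)
    (hM : M = max (ψ 0 / φ 0) ((p * β + κ * γ) / (β * (α - γ)))) :
    ∀ t ∈ Set.Ico (0:ℝ) ω, ψ t / φ t ≤ M := by
  intro t₀ ht₀
  by_contra hcon
  push_neg at hcon
  obtain ⟨ht₀0, ht₀ω⟩ := ht₀
  have hω : (0:ℝ) < ω := lt_of_le_of_lt ht₀0 ht₀ω
  have h0mem : (0:ℝ) ∈ Set.Ico (0:ℝ) ω := ⟨le_refl _, hω⟩
  have hsubpos : 0 < α - γ := sub_pos.mpr hαγ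
  have hMge : (p * β + κ * γ) / (β * (α - γ)) ≤ M := hM ▸ le_max_right _ _
  have hMpos : 0 < M :=
    lt_of_lt_of_le (div_pos (by positivity) (by positivity)) hMge
  set g := fun t => ψ t - M * φ t with hgdef
  have hg' : ∀ t ∈ Set.Ico (0:ℝ) ω, HasDerivAt g (ψ' t - M * φ' t) t := by
    intro t ht
    exact (hψder t ht).sub ((hφder t ht).const_mul M)
  have hgt₀ : 0 < g t₀ := by
    have hφ0 := hφpos t₀ ⟨ht₀0, ht₀ω⟩
    simp only [hgdef]
    nlinarith [(lt_div_iff₀ hφ0).mp hcon]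
  have hg0 : g 0 ≤ 0 := by
    have hφ0 := hφpos 0 h0mem
    have h1 : ψ 0 / φ 0 ≤ M := hM ▸ le_max_left _ _
    simp only [hgdef]
    nlinarith [(div_le_iff₀ hφ0).mp h1]
  set T := {t : ℝ | t ∈ Set.Icc (0:ℝ) t₀ ∧ g t ≤ 0} with hTdef
  have hne : T.Nonempty := ⟨0, ⟨le_refl _, ht₀0⟩, hg0⟩
  have hbdd : BddAbove T := ⟨t₀, fun x hx => hx.1.2⟩
  have hIccsub : Set.Icc (0:ℝ) t₀ ⊆ Set.Ico (0:ℝ) ω := fun x hx =>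
    ⟨hx.1, lt_of_le_of_lt hx.2 ht₀ω⟩
  have hcontg : ContinuousOn g (Set.Icc (0:ℝ) t₀) := fun x hx =>
    ((hg' x (hIccsub hx)).continuousAt).continuousWithinAt
  have hTclosed : IsClosed T := by
    have hTeq : T = Set.Icc (0:ℝ) t₀ ∩ g ⁻¹' Set.Iic 0 := by
      ext x; simp [hTdef]
    rw [hTeq]
    exact hcontg.preimage_isClosed_of_isClosed isClosed_Icc isClosed_Iic
  set s := sSup T with hsdef
  have hsT : s ∈ T := hTclosed.csSup_mem hne hbdd
  have hs_le : s ≤ t₀ := csSup_le hne fun x hx => hx.1.2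
  have hslt : s < t₀ := by
    rcases lt_or_eq_of_le hs_le with h | h
    · exact h
    · exfalso; rw [h] at hsT; linarith [hsT.2, hgt₀]
  have hsmem : s ∈ Set.Ico (0:ℝ) ω := ⟨hsT.1.1, lt_of_le_of_lt hs_le ht₀ω⟩
  have hgpos : ∀ x ∈ Set.Ioc s t₀, 0 < g x := by
    intro x hx
    by_contra h
    push_neg at h
    have hxT : x ∈ T := ⟨⟨le_trans hsT.1.1 hx.1.le, hx.2⟩, h⟩
    exact absurd (le_csSup hbdd hxT) (not_le.mpr hx.1)
  have hgs0 : g s = 0 := by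
    have h1 : g s ≤ 0 := hsT.2
    have hc : Filter.Tendsto g (nhdsWithin s (Set.Ioi s)) (nhds (g s)) :=
      ((hg' s hsmem).continuousAt).continuousWithinAt
    have h2 : 0 ≤ g s := by
      refine ge_of_tendsto hc ?_
      filter_upwards [Ioc_mem_nhdsGT_of_mem ⟨le_refl s, hslt⟩] with x hx
      exact (hgpos x hx).le
    linarith
  have hder : HasDerivWithinAt g (ψ' s - M * φ' s) (Set.Ioi s) s :=
    (hg' s hsmem).hasDerivWithinAt
  have hslope : Filter.Tendsto (slope g s) (nhdsWithin s (Set.Ioi s))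
      (nhds (ψ' s - M * φ' s)) := by
    have h := hasDerivWithinAt_iff_tendsto_slope.mp hder
    simpa using h
  have hd0 : 0 ≤ ψ' s - M * φ' s := by
    refine ge_of_tendsto hslope ?_
    filter_upwards [Ioc_mem_nhdsGT_of_mem ⟨le_refl s, hslt⟩] with x hx
    have hgx := hgpos x hx
    have hxs : 0 < x - s := sub_pos.mpr hx.1
    rw [slope_def_field]
    apply div_nonneg _ hxs.le
    rw [hgs0]
    linarith
  -- Final contradiction via the differential inequality.
  have hψs := hψeq s hsmem
  have hφs := hφineq s hsmem
  have hφls := hφlb s hsmem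
  have hφps := hφpos s hsmem
  have hγφ : β ≤ γ * φ s := by
    rw [ge_iff_le, div_le_iff₀ hγ] at hφls
    linarith
  have hMgeq : p * β + κ * γ ≤ β * (α - γ) * M := by
    rw [div_le_iff₀ (by positivity)] at hMge
    linarith
  have hψMφ : ψ s = M * φ s := by
    have := hgs0
    simp only [hgdef] at this
    linarith
  have k1 : 0 ≤ p * φ s - M * (α - γ) * φ s + κ - M * β := by
    nlinarith [hd0, mul_le_mul_of_nonneg_left hφs hMpos.le]
  nlinarith [mul_nonneg hβ.le k1,
    mul_le_mul_of_nonneg_right hMgeq hφps.le,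
    mul_le_mul_of_nonneg_left hγφ hκ.le,
    mul_pos (mul_pos hMpos hβ) hβ]
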